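/- Let f : ℝ → ℝ be continuously differentiable and suppose f′ has a unique zero θ* ∈ ℝ. Let φ : [0, ∞) → ℝ be differentiable and bounded, and suppose φ′(t) = −f′(φ(t)) for all t ≥ 0. Then φ(t) → θ* as t → ∞. -/

import Mathlib

open Filter Set Topology
-- Barrier lemma: if h starts below level c and has negative derivative whenever
-- it touches the level c, then it stays below c.
lemma barrier_lemma {h h' : ℝ → ℝ} {a c : ℝ}
    (hd : ∀ t, a ≤ t → HasDerivAt h (h' t) t)
    (ha : h a < c)
    (hlev : ∀ t, a ≤ t → h t = c → h' t < 0) :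
    ∀ t, a ≤ t → h t < c := by
  intro t2 ht2
  by_contra hcon
  push_neg at hcon
  have hcontOn : ContinuousOn h (Set.Icc a t2) := fun x hx =>
    ((hd x hx.1).continuousAt).continuousWithinAt
  set S : Set ℝ := Set.Icc a t2 ∩ h ⁻¹' Set.Ici c with hSdef
  have hSne : S.Nonempty := ⟨t2, ⟨ht2, le_refl _⟩, hcon⟩
  have hScl : IsClosed S :=
    hcontOn.preimage_isClosed_of_isClosed isClosed_Icc isClosed_Ici
  have hSbdd : BddBelow S := ⟨a, fun x hx => hx.1.1⟩
  set T := sInf S with hTdef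
  have hTS : T ∈ S := hScl.csInf_mem hSne hSbdd
  have haT : a ≤ T := hTS.1.1
  have hTt2 : T ≤ t2 := hTS.1.2
  have hcT : c ≤ h T := hTS.2
  have hTa : a < T := by
    rcases lt_or_eq_of_le haT with h1 | h1
    · exact h1
    · exfalso; rw [← h1] at hcT; linarith
  have hbelow : ∀ s, a ≤ s → s < T → h s < c := by
    intro s hs hsT
    by_contra hbc
    push_neg at hbc
    have : s ∈ S := ⟨⟨hs, hsT.le.trans hTt2⟩, hbc⟩
    exact absurd (csInf_le hSbdd this) (not_le.mpr hsT)
  have hhT : h T = c := by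
    rcases lt_or_eq_of_le hcT with h1 | h1
    · exfalso
      obtain ⟨s, hs, hseq⟩ := intermediate_value_Icc haT
        (fun x hx => ((hd x hx.1).continuousAt).continuousWithinAt)
        (⟨ha.le, h1.le⟩ : c ∈ Set.Icc (h a) (h T))
      have hsT : s < T := by
        rcases lt_or_eq_of_le hs.2 with h2 | h2
        · exact h2
        · exfalso; rw [h2] at hseq; linarith
      exact absurd (hbelow s hs.1 hsT) (by rw [hseq]; exact lt_irrefl c)
    · exact h1.symm
  have hderT : h' T < 0 := hlev T haT hhT
  have hslope : Tendsto (slope h T) (𝓝[≠] T) (𝓝 (h' T)) :=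
    hasDerivAt_iff_tendsto_slope.mp (hd T haT)
  have hev : ∀ᶠ x in 𝓝[≠] T, slope h T x < 0 :=
    hslope.eventually_lt_const hderT
  have hev2 : ∀ᶠ x in 𝓝[<] T, slope h T x < 0 :=
    hev.filter_mono (nhdsWithin_mono T (fun x hx => ne_of_lt hx))
  have hev3 : ∀ᶠ x in 𝓝[<] T, a < x :=
    eventually_nhdsWithin_of_eventually_nhds (eventually_gt_nhds hTa)
  have hev4 : ∀ᶠ x in 𝓝[<] T, x < T := eventually_mem_nhdsWithin
  obtain ⟨x, hx1, hx2, hx3⟩ := (hev2.and (hev3.and hev4)).exists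
  rw [slope_def_field] at hx1
  have hnum : 0 < h x - h T := by
    rcases div_neg_iff.mp hx1 with ⟨h1, h2⟩ | ⟨h1, h2⟩
    · exact h1
    · linarith
  have := hbelow x hx2.le hx3
  rw [hhT] at hnum
  linarith
lemma sign_dichotomy {g : ℝ → ℝ} (hg : Continuous g) {θ : ℝ}
    (hz : ∀ x, θ < x → g x ≠ 0) :
    (∀ x, θ < x → 0 < g x) ∨ (∀ x, θ < x → g x < 0) := by
  by_contra hcon
  push_neg at hcon
  obtain ⟨⟨x1, hx1, hx1'⟩, ⟨x2, hx2, hx2'⟩⟩ := hcon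
  have h1 : g x1 < 0 := lt_of_le_of_ne hx1' (hz x1 hx1)
  have h2 : 0 < g x2 := lt_of_le_of_ne hx2' (Ne.symm (hz x2 hx2))
  have h0 : (0:ℝ) ∈ Set.uIcc (g x1) (g x2) :=
    Set.mem_uIcc.mpr (Or.inl ⟨h1.le, h2.le⟩)
  obtain ⟨x, hx, hx0⟩ := intermediate_value_uIcc (hg.continuousOn) h0
  rw [Set.uIcc, Set.mem_Icc] at hx
  have : θ < x := lt_of_lt_of_le (lt_inf_iff.mpr ⟨hx1, hx2⟩) hx.1
  exact hz x this hx0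

lemma linear_decay {ψ ψ' : ℝ → ℝ} {a δ : ℝ}
    (hd : ∀ t, a ≤ t → HasDerivAt ψ (ψ' t) t)
    (hδ : ∀ t, a ≤ t → ψ' t ≤ -δ) :
    ∀ t, a ≤ t → ψ t ≤ ψ a - δ * (t - a) := by
  have hder : ∀ t, a ≤ t → HasDerivAt (fun s => ψ s + δ * s) (ψ' t + δ) t := by
    intro t ht
    have := (hd t ht).add ((hasDerivAt_id t).const_mul δ)
    rw [mul_one] at this
    exact this
  have key : AntitoneOn (fun t => ψ t + δ * t) (Set.Ici a) := by
    apply antitoneOn_of_deriv_nonpos (convex_Ici a)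
    · exact fun x hx => ((hder x hx).continuousAt).continuousWithinAt
    · intro x hx
      rw [interior_Ici] at hx
      exact (hder x (le_of_lt hx)).differentiableAt.differentiableWithinAt
    · intro x hx
      rw [interior_Ici] at hx
      rw [(hder x (le_of_lt hx)).deriv]
      linarith [hδ x (le_of_lt hx)]
  intro t ht
  have := key (Set.self_mem_Ici) (ht : t ∈ Set.Ici a) ht
  simp only at this
  linarith
lemma upper_bound_lemma {g : ℝ → ℝ} (hg : Continuous g) {θ B : ℝ}
    (hz : ∀ x, θ < x → g x ≠ 0)
    {φ : ℝ → ℝ} (hφ : ∀ t, 0 ≤ t → HasDerivAt φ (-g (φ t)) t)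
    (hB : ∀ t, 0 ≤ t → |φ t| ≤ B)
    {ε : ℝ} (hε : 0 < ε) :
    ∃ T, 0 ≤ T ∧ ∀ t, T ≤ t → φ t < θ + ε := by
  rcases sign_dichotomy hg hz with hpos | hneg
  · -- attracting side: g > 0 above θ
    by_cases hLB : θ + ε ≤ B
    · obtain ⟨x0, hx0, hmin⟩ :=
        isCompact_Icc.exists_isMinOn (Set.nonempty_Icc.mpr hLB) hg.continuousOn
      have hδ : 0 < g x0 := hpos x0 (lt_of_lt_of_le (by linarith) hx0.1)
      have step1 : ∃ t1, 0 ≤ t1 ∧ φ t1 < θ + ε := by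
        by_contra hcon
        push_neg at hcon
        have hd' : ∀ t, (0:ℝ) ≤ t → -g (φ t) ≤ -(g x0) := by
          intro t ht
          have hmem : φ t ∈ Set.Icc (θ + ε) B := ⟨hcon t ht, (abs_le.mp (hB t ht)).2⟩
          have := hmin hmem
          simp only [Set.mem_setOf_eq] at this
          linarith
        have hq : (0:ℝ) ≤ (B - (θ + ε)) / g x0 :=
          div_nonneg (by linarith) hδ.le
        have h1 := linear_decay hφ hd' ((B - (θ + ε)) / g x0 + 1) (by linarith)
        have h2 := hcon ((B - (θ + ε)) / g x0 + 1) (by linarith)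
        have hφ0 : φ 0 ≤ B := (abs_le.mp (hB 0 le_rfl)).2
        have hmul : g x0 * ((B - (θ + ε)) / g x0 + 1 - 0) = B - (θ + ε) + g x0 := by
          field_simp
          ring
        linarith
      obtain ⟨t1, ht1, hφt1⟩ := step1
      refine ⟨t1, ht1, ?_⟩
      exact barrier_lemma (h' := fun t => -g (φ t))
        (fun t ht => hφ t (ht1.trans ht)) hφt1
        (fun t ht heq => by
          have hθ : θ < φ t := by rw [heq]; linarith
          have := hpos (φ t) hθ
          show -g (φ t) < 0
          linarith)
    · exact ⟨0, le_rfl, fun t ht =>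
        lt_of_le_of_lt (abs_le.mp (hB t ht)).2 (not_le.mp hLB)⟩
  · -- repelling side: g < 0 above θ; then φ never exceeds θ
    refine ⟨0, le_rfl, fun t ht => ?_⟩
    suffices hθ : φ t ≤ θ by linarith
    by_contra hgt
    push_neg at hgt
    have hm1 : θ < (θ + φ t)/2 := by linarith
    have hm2 : (θ + φ t)/2 < φ t := by linarith
    have hbar : ∀ s, t ≤ s → -φ s < -((θ + φ t)/2) := by
      apply barrier_lemma (h' := fun s => g (φ s))
      · intro s hs
        exact (hφ s (ht.trans hs)).neg.congr_deriv (by simp)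
      · linarith
      · intro s hs heq
        have hm : φ s = (θ + φ t)/2 := by linarith
        show g (φ s) < 0
        rw [hm]
        exact hneg _ hm1
    have hcB : φ t ≤ B := (abs_le.mp (hB t ht)).2
    have hmB : (θ + φ t)/2 ≤ B := by linarith
    obtain ⟨x0, hx0, hmin⟩ :=
      isCompact_Icc.exists_isMinOn (Set.nonempty_Icc.mpr hmB) hg.neg.continuousOn
    have hδ : 0 < -g x0 := by
      have := hneg x0 (lt_of_lt_of_le hm1 hx0.1)
      linarith
    have hd' : ∀ s, t ≤ s → g (φ s) ≤ -(-g x0) := by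
      intro s hs
      have hmem : φ s ∈ Set.Icc ((θ + φ t)/2) B := by
        constructor
        · linarith [hbar s hs]
        · exact (abs_le.mp (hB s (ht.trans hs))).2
      have := hmin hmem
      simp only [Set.mem_setOf_eq, Pi.neg_apply] at this
      linarith
    have hq : (0:ℝ) ≤ (B - φ t) / (-g x0) := div_nonneg (by linarith) hδ.le
    have h1 := linear_decay (ψ := fun s => -φ s) (ψ' := fun s => g (φ s))
      (fun s hs => (hφ s (ht.trans hs)).neg.congr_deriv (by simp)) hd'
      (t + (B - φ t) / (-g x0) + 1) (by linarith)
    have h2 : φ (t + (B - φ t) / (-g x0) + 1) ≤ B :=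
      (abs_le.mp (hB _ (by linarith))).2
    have hne : g x0 ≠ 0 := ne_of_lt (by linarith)
    have hmul : (-g x0) * (t + (B - φ t) / (-g x0) + 1 - t) = B - φ t + (-g x0) := by
      field_simp
      ring
    linarith

/-- A bounded trajectory of the gradient flow `φ′ = −f′(φ)` of a continuously
differentiable function `f` whose derivative has a unique zero `θ*` converges
to `θ*`. -/
theorem gradient_flow_converges_to_unique_critical_point
    (f f' : ℝ → ℝ)
    (hderiv : ∀ x, HasDerivAt f (f' x) x)
    (hcont : Continuous f')
    (θstar : ℝ) (hzero : f' θstar = 0)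
    (huniq : ∀ θ, f' θ = 0 → θ = θstar)
    (φ : ℝ → ℝ)
    (hφ : ∀ t : ℝ, 0 ≤ t → HasDerivAt φ (-f' (φ t)) t)
    (hbdd : ∃ B : ℝ, ∀ t : ℝ, 0 ≤ t → |φ t| ≤ B) :
    Tendsto φ atTop (nhds θstar) := by
  obtain ⟨B, hB⟩ := hbdd
  rw [Metric.tendsto_atTop]
  intro ε hε
  -- upper bound
  obtain ⟨T1, hT1, hup⟩ := upper_bound_lemma hcont
    (θ := θstar) (fun x hx h0 => absurd (huniq x h0) (ne_of_gt hx))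
    hφ hB hε
  -- lower bound via reflection
  have hlow' := upper_bound_lemma (g := fun x => -f' (-x))
    ((hcont.comp continuous_neg).neg)
    (θ := -θstar)
    (fun x hx h0 => by
      have h0' : f' (-x) = 0 := by simpa using (neg_eq_zero.mp h0)
      have := huniq (-x) h0'
      linarith)
    (φ := fun t => -φ t)
    (fun t ht => (hφ t ht).neg.congr_deriv (by simp))
    (fun t ht => by simpa using hB t ht)
    hε
  obtain ⟨T2, hT2, hlow⟩ := hlow'
  refine ⟨max T1 T2, fun t ht => ?_⟩
  have h1 := hup t (le_trans (le_max_left _ _) ht)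
  have h2 := hlow t (le_trans (le_max_right _ _) ht)
  rw [Real.dist_eq, abs_sub_lt_iff]
  constructor <;> linarith
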